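/- arXiv:2412.12049 — 2 statements merged into one kernel-verified Lean document; each statement's English description precedes it below -/
import Mathlib

section
/- Let f : R^d → R be L-smooth and bounded below by f*, and suppose random vectors z_t satisfy the biased ABC conditions ⟨∇f(θ^t), E[z_t | θ^t]⟩ ≥ b‖∇f(θ^t)‖² - c and E[‖z_t‖² | θ^t] ≤ 2A(f(θ^t) - f*) + B‖∇f(θ^t)‖² + C with b > 0. Then for the iteration θ^{t+1} = θ^t - α z_t with 0 < α ≤ b/(LB), min_{0 ≤ t ≤ T-1} E[‖∇f(θ^t)‖²] ≤ (2(1 + ALα²)^T / (b α T))(f(θ^0) - f*) + (LαC)/b + 2c/b. -/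
open MeasureTheory RealInnerProductSpace


section aux

variable {Ω : Type*} {m mΩ : MeasurableSpace Ω} {μ : Measure Ω}

lemma sgd_integrable_inner {E : Type*} [NormedAddCommGroup E] [InnerProductSpace ℝ E]
    {g h : Ω → E} (hg : MemLp g 2 μ) (hh : MemLp h 2 μ) :
    Integrable (fun x => ⟪g x, h x⟫) μ := by
  have h2 := MeasureTheory.L2.integrable_inner (𝕜 := ℝ) (hg.toLp g) (hh.toLp h)
  refine h2.congr ?_
  filter_upwards [hg.coeFn_toLp, hh.coeFn_toLp] with x h1 h2
  rw [h1, h2]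

lemma sgd_condExp_clm [IsFiniteMeasure μ] (hm : m ≤ mΩ)
    {E F : Type*} [NormedAddCommGroup E] [NormedSpace ℝ E] [CompleteSpace E]
    [NormedAddCommGroup F] [NormedSpace ℝ F] [CompleteSpace F]
    (T : E →L[ℝ] F) {g : Ω → E} (hg : Integrable g μ) :
    (fun ω => T ((μ[g|m]) ω)) =ᵐ[μ] μ[fun ω => T (g ω)|m] := by
  refine ae_eq_condExp_of_forall_setIntegral_eq hm (T.integrable_comp hg)
    (fun s _ _ => (T.integrable_comp integrable_condExp).integrableOn)
    (fun s hs _ => ?_)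
    ((T.continuous.comp_stronglyMeasurable stronglyMeasurable_condExp).aestronglyMeasurable)
  rw [T.integral_comp_comm integrable_condExp.integrableOn,
    setIntegral_condExp hm hg hs, T.integral_comp_comm hg.integrableOn]

lemma sgd_descent {d : ℕ} (f : EuclideanSpace ℝ (Fin d) → ℝ) (L : ℝ)
    (hf : Differentiable ℝ f)
    (hL : ∀ x y, ‖gradient f x - gradient f y‖ ≤ L * ‖x - y‖)
    (x y : EuclideanSpace ℝ (Fin d)) :
    f y ≤ f x + ⟪gradient f x, y - x⟫ + L / 2 * ‖y - x‖ ^ 2 := by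
  set v := y - x with hv
  have hline : ∀ t : ℝ, HasDerivAt (fun s : ℝ => f (x + s • v)) ⟪gradient f (x + t • v), v⟫ t := by
    intro t
    have h1 : HasDerivAt (fun s : ℝ => x + s • v) v t := by
      simpa using ((hasDerivAt_id t).smul_const v).const_add x
    have h2 := ((hf (x + t • v)).hasGradientAt).hasFDerivAt
    have h3 := h2.comp_hasDerivAt t h1
    simpa [InnerProductSpace.toDual_apply_apply, Function.comp_def] using h3
  set g : ℝ → ℝ := fun t => f (x + t • v) - t * ⟪gradient f x, v⟫ - L / 2 * t ^ 2 * ‖v‖ ^ 2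
    with hgdef
  have hg : ∀ t : ℝ, HasDerivAt g
      (⟪gradient f (x + t • v), v⟫ - ⟪gradient f x, v⟫ - L / 2 * (2 * t) * ‖v‖ ^ 2) t := by
    intro t
    have hp : HasDerivAt (fun t : ℝ => t * ⟪gradient f x, v⟫) ⟪gradient f x, v⟫ t := by
      simpa using (hasDerivAt_id t).mul_const (⟪gradient f x, v⟫)
    have hq : HasDerivAt (fun t : ℝ => L / 2 * t ^ 2 * ‖v‖ ^ 2)
        (L / 2 * (2 * t) * ‖v‖ ^ 2) t := by
      have h4 := ((hasDerivAt_pow 2 t).const_mul (L / 2)).mul_const (‖v‖ ^ 2)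
      simpa [mul_comm, mul_assoc, mul_left_comm] using h4
    exact ((hline t).sub hp).sub hq
  have hanti : AntitoneOn g (Set.Icc (0:ℝ) 1) := by
    refine antitoneOn_of_deriv_nonpos (convex_Icc 0 1)
      (fun t _ => (hg t).continuousAt.continuousWithinAt)
      (fun t _ => (hg t).differentiableAt.differentiableWithinAt) ?_
    intro t ht
    rw [interior_Icc] at ht
    rw [(hg t).deriv]
    have h1 : ⟪gradient f (x + t • v) - gradient f x, v⟫ ≤ L * t * ‖v‖ ^ 2 := by
      calc ⟪gradient f (x + t • v) - gradient f x, v⟫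
          ≤ ‖gradient f (x + t • v) - gradient f x‖ * ‖v‖ := real_inner_le_norm _ _
        _ ≤ (L * ‖(x + t • v) - x‖) * ‖v‖ :=
            mul_le_mul_of_nonneg_right (hL _ _) (norm_nonneg _)
        _ = L * t * ‖v‖ ^ 2 := by
            rw [add_sub_cancel_left, norm_smul, Real.norm_eq_abs, abs_of_pos ht.1]
            ring
    rw [inner_sub_left] at h1
    nlinarith [h1]
  have h01 := hanti (Set.left_mem_Icc.2 zero_le_one) (Set.right_mem_Icc.2 zero_le_one) zero_le_one
  have hg1 : g 1 = f y - ⟪gradient f x, v⟫ - L / 2 * ‖v‖ ^ 2 := by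
    simp [hgdef, hv]
  have hg0 : g 0 = f x := by simp [hgdef]
  rw [hg1, hg0] at h01
  linarith

lemma sgd_telescope (δ N : ℕ → ℝ) (r e k : ℝ) (hr : 1 ≤ r) (hk : 0 < k) (he : 0 ≤ e)
    (hδ : ∀ t, 0 ≤ δ t) (hN : ∀ t, 0 ≤ N t)
    (hstep : ∀ t, δ (t + 1) ≤ r * δ t - k * N t + e)
    (T : ℕ) (hT : 0 < T) (m : ℝ) (hm : 0 ≤ m) (hmN : ∀ t, t < T → m ≤ N t) :
    m ≤ r ^ T * δ 0 / (k * T) + e / k := by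
  have hr0 : (0:ℝ) < r := lt_of_lt_of_le one_pos hr
  have hrn : ∀ n : ℕ, (0:ℝ) < r ^ n := fun n => pow_pos hr0 n
  have main : ∀ n : ℕ, ∑ t ∈ Finset.range n, (k * N t - e) / r ^ (t + 1) ≤ δ 0 - δ n / r ^ n := by
    intro n
    induction n with
    | zero => simp
    | succ n ih =>
      rw [Finset.sum_range_succ]
      have h1 : k * N n - e ≤ r * δ n - δ (n + 1) := by linarith [hstep n]
      have e1 : δ n / r ^ n = r * δ n / r ^ (n + 1) := by
        rw [pow_succ]
        field_simp
      have h2 : (k * N n - e) / r ^ (n + 1) ≤ δ n / r ^ n - δ (n + 1) / r ^ (n + 1) := by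
        rw [e1, div_sub_div_same]
        exact (div_le_div_iff_of_pos_right (hrn (n + 1))).mpr h1
      linarith
  have hTr : (0:ℝ) < (T : ℝ) := by exact_mod_cast hT
  by_cases hcase : k * m - e ≤ 0
  · have h1 : m ≤ e / k := by rw [le_div_iff₀ hk]; linarith
    have h2 : 0 ≤ r ^ T * δ 0 / (k * T) :=
      div_nonneg (mul_nonneg (hrn T).le (hδ 0)) (by positivity)
    linarith
  · push_neg at hcase
    have hsum_lb : (T : ℝ) * ((k * m - e) / r ^ T) ≤
        ∑ t ∈ Finset.range T, (k * N t - e) / r ^ (t + 1) := by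
      calc (T : ℝ) * ((k * m - e) / r ^ T)
          = ∑ _t ∈ Finset.range T, (k * m - e) / r ^ T := by
            rw [Finset.sum_const, Finset.card_range, nsmul_eq_mul]
        _ ≤ ∑ t ∈ Finset.range T, (k * N t - e) / r ^ (t + 1) := by
            refine Finset.sum_le_sum fun t ht => ?_
            have ht' : t < T := Finset.mem_range.mp ht
            have hle : r ^ (t + 1) ≤ r ^ T := pow_le_pow_right₀ hr ht'
            calc (k * m - e) / r ^ T ≤ (k * m - e) / r ^ (t + 1) :=
                  div_le_div_of_nonneg_left hcase.le (hrn (t + 1)) hle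
                _ ≤ (k * N t - e) / r ^ (t + 1) := by
                  refine (div_le_div_iff_of_pos_right (hrn (t + 1))).mpr ?_
                  have := hmN t ht'
                  nlinarith
    have h3 : (T : ℝ) * ((k * m - e) / r ^ T) ≤ δ 0 := by
      have hm1 := main T
      have hm2 : 0 ≤ δ T / r ^ T := div_nonneg (hδ T) (hrn T).le
      linarith
    rw [mul_div_assoc'] at h3
    have h4 := (div_le_iff₀ (hrn T)).mp h3
    have h5 : k * m - e ≤ r ^ T * δ 0 / T := by
      rw [le_div_iff₀ hTr]; nlinarith
    have h6 : m ≤ (r ^ T * δ 0 / T + e) / k := by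
      rw [le_div_iff₀ hk]; linarith
    have h7 : (r ^ T * δ 0 / (T:ℝ) + e) / k = r ^ T * δ 0 / (k * T) + e / k := by
      field_simp
    linarith [h6, h7.le, h7.ge]

end aux

/-- Biased SGD convergence bound for nonconvex smooth objectives under the
biased ABC condition (stated with conditional expectations w.r.t. a
filtration to which the iterates are adapted). -/
theorem stmt_9 {d : ℕ} {Ω : Type*} {mΩ : MeasurableSpace Ω} (μ : Measure Ω)
    [IsProbabilityMeasure μ]
    (f : EuclideanSpace ℝ (Fin d) → ℝ) (L fstar : ℝ)
    (hf : Differentiable ℝ f)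
    (hL : ∀ x y, ‖gradient f x - gradient f y‖ ≤ L * ‖x - y‖)
    (hbdd : ∀ x, fstar ≤ f x)
    (b c A B C α : ℝ) (hb : 0 < b) (hA : 0 ≤ A) (hB : 0 ≤ B) (hC : 0 ≤ C)
    (hc : 0 ≤ c) (hα : 0 < α) (hαB : α ≤ b / (L * B))
    (ℱ : ℕ → MeasurableSpace Ω) (hℱ : ∀ t, ℱ t ≤ mΩ)
    (θ z : ℕ → Ω → EuclideanSpace ℝ (Fin d))
    (θ0 : EuclideanSpace ℝ (Fin d)) (hθ0 : ∀ ω, θ 0 ω = θ0)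
    (hadapted : ∀ t, StronglyMeasurable[ℱ t] (θ t))
    (hz : ∀ t, MemLp (z t) 2 μ)
    (hfint : ∀ t, Integrable (fun ω => f (θ t ω)) μ)
    (hgint : ∀ t, Integrable (fun ω => ‖gradient f (θ t ω)‖ ^ 2) μ)
    (hupdate : ∀ t ω, θ (t + 1) ω = θ t ω - α • z t ω)
    (hcorr : ∀ t, ∀ᵐ ω ∂μ,
      ⟪gradient f (θ t ω), (μ[z t | ℱ t]) ω⟫ ≥
        b * ‖gradient f (θ t ω)‖ ^ 2 - c)
    (hsec : ∀ t, ∀ᵐ ω ∂μ,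
      (μ[fun ω' => ‖z t ω'‖ ^ 2 | ℱ t]) ω ≤
        2 * A * (f (θ t ω) - fstar) + B * ‖gradient f (θ t ω)‖ ^ 2 + C) :
    ∀ T : ℕ, (hT : 0 < T) →
      (Finset.range T).inf' (Finset.nonempty_range_iff.mpr hT.ne')
          (fun t => ∫ ω, ‖gradient f (θ t ω)‖ ^ 2 ∂μ) ≤
        (2 * (1 + A * L * α ^ 2) ^ T / (b * α * T)) * (f θ0 - fstar) +
          L * α * C / b + 2 * c / b := by
  intro T hT
  -- positivity of L and B
  have hLB : 0 < L * B := by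
    by_contra h
    push_neg at h
    have h2 : b / (L * B) ≤ 0 := div_nonpos_iff.mpr (Or.inl ⟨hb.le, h⟩)
    linarith
  have hLpos : 0 < L := by nlinarith
  have hαLB : L * B * α ≤ b := by
    have h1 := (le_div_iff₀ hLB).mp hαB
    nlinarith
  have hgc : Continuous (gradient f) := by
    have hlip : LipschitzWith (Real.toNNReal L) (gradient f) := by
      apply LipschitzWith.of_dist_le_mul
      intro x y
      rw [dist_eq_norm, dist_eq_norm]
      calc ‖gradient f x - gradient f y‖ ≤ L * ‖x - y‖ := hL x y
        _ = (Real.toNNReal L) * ‖x - y‖ := by rw [Real.coe_toNNReal _ hLpos.le]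
    exact hlip.continuous
  set F : ℕ → ℝ := fun t => ∫ ω, f (θ t ω) ∂μ with hFdef
  set N : ℕ → ℝ := fun t => ∫ ω, ‖gradient f (θ t ω)‖ ^ 2 ∂μ with hNdef
  have hGsm : ∀ t, StronglyMeasurable[ℱ t] fun ω => gradient f (θ t ω) :=
    fun t => hgc.comp_stronglyMeasurable (hadapted t)
  have hG2 : ∀ t, MemLp (fun ω => gradient f (θ t ω)) 2 μ := fun t =>
    (memLp_two_iff_integrable_sq_norm
      ((hGsm t).mono (hℱ t)).aestronglyMeasurable).mpr (hgint t)
  have hGz : ∀ t, Integrable (fun ω => ⟪gradient f (θ t ω), z t ω⟫) μ :=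
    fun t => sgd_integrable_inner (hG2 t) (hz t)
  have hzsq : ∀ t, Integrable (fun ω => ‖z t ω‖ ^ 2) μ :=
    fun t => (memLp_two_iff_integrable_sq_norm (hz t).1).mp (hz t)
  have hNt : ∀ t, 0 ≤ N t := fun t => integral_nonneg fun ω => by positivity
  have hFt : ∀ t, fstar ≤ F t := by
    intro t
    calc fstar = ∫ _ω, fstar ∂μ := by simp
      _ ≤ F t := integral_mono (integrable_const _) (hfint t) fun ω => hbdd _
  -- key conditional expectation identity
  have key1 : ∀ t, (μ[fun ω => ⟪gradient f (θ t ω), z t ω⟫|ℱ t]) =ᵐ[μ]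
      fun ω => ⟪gradient f (θ t ω), (μ[z t|ℱ t]) ω⟫ := by
    intro t
    have hzi : ∀ i : Fin d, Integrable (fun ω => z t ω i) μ := fun i =>
      (EuclideanSpace.proj i : EuclideanSpace ℝ (Fin d) →L[ℝ] ℝ).integrable_comp
        ((hz t).integrable one_le_two)
    have hGi2 : ∀ i : Fin d, MemLp (fun ω => gradient f (θ t ω) i) 2 μ := fun i =>
      (EuclideanSpace.proj i : EuclideanSpace ℝ (Fin d) →L[ℝ] ℝ).comp_memLp' (hG2 t)
    have hzi2 : ∀ i : Fin d, MemLp (fun ω => z t ω i) 2 μ := fun i =>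
      (EuclideanSpace.proj i : EuclideanSpace ℝ (Fin d) →L[ℝ] ℝ).comp_memLp' (hz t)
    have hprod : ∀ i : Fin d, Integrable (fun ω => gradient f (θ t ω) i * z t ω i) μ := by
      intro i
      have h2 := sgd_integrable_inner (E := ℝ) (hGi2 i) (hzi2 i)
      simpa [RCLike.inner_apply, mul_comm] using h2
    have hsum : (fun ω => ⟪gradient f (θ t ω), z t ω⟫) =
        ∑ i : Fin d, fun ω => gradient f (θ t ω) i * z t ω i := by
      funext ω
      simp [PiLp.inner_apply, RCLike.inner_apply, Finset.sum_apply, -inner_gradient_left, mul_comm]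
    rw [hsum]
    have hco : ∀ i : Fin d, (μ[fun ω => gradient f (θ t ω) i * z t ω i|ℱ t]) =ᵐ[μ]
        fun ω => gradient f (θ t ω) i * (μ[z t|ℱ t]) ω i := by
      intro i
      have hGism : StronglyMeasurable[ℱ t] fun ω => gradient f (θ t ω) i :=
        (EuclideanSpace.proj i :
          EuclideanSpace ℝ (Fin d) →L[ℝ] ℝ).continuous.comp_stronglyMeasurable (hGsm t)
      have h1 := condExp_mul_of_stronglyMeasurable_left (m := ℱ t) (μ := μ) hGism (hprod i) (hzi i)
      have h2 := sgd_condExp_clm (hℱ t)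
        (EuclideanSpace.proj i : EuclideanSpace ℝ (Fin d) →L[ℝ] ℝ)
        ((hz t).integrable one_le_two)
      filter_upwards [h1, h2] with ω hω1 hω2
      have h3 : (μ[fun ω => gradient f (θ t ω) i * z t ω i|ℱ t]) ω
          = gradient f (θ t ω) i * (μ[fun ω => z t ω i|ℱ t]) ω := hω1
      have h4 : (μ[z t|ℱ t]) ω i = (μ[fun ω => z t ω i|ℱ t]) ω := hω2
      rw [h3, h4]
    calc (μ[∑ i : Fin d, fun ω => gradient f (θ t ω) i * z t ω i|ℱ t])
        =ᵐ[μ] ∑ i : Fin d, (μ[fun ω => gradient f (θ t ω) i * z t ω i|ℱ t]) :=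
          condExp_finset_sum (fun i _ => hprod i) (ℱ t)
      _ =ᵐ[μ] ∑ i : Fin d, fun ω => gradient f (θ t ω) i * (μ[z t|ℱ t]) ω i :=
          eventuallyEq_sum fun i _ => hco i
      _ = fun ω => ⟪gradient f (θ t ω), (μ[z t|ℱ t]) ω⟫ := by
          funext ω
          simp [PiLp.inner_apply, RCLike.inner_apply, Finset.sum_apply, -inner_gradient_left, mul_comm]
  -- first moment bound
  have hI1 : ∀ t, b * N t - c ≤ ∫ ω, ⟪gradient f (θ t ω), z t ω⟫ ∂μ := by
    intro t
    have hIce : Integrable (fun ω => ⟪gradient f (θ t ω), (μ[z t|ℱ t]) ω⟫) μ :=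
      integrable_condExp.congr (key1 t)
    have i1 : Integrable (fun ω => b * ‖gradient f (θ t ω)‖ ^ 2) μ := by
      exact (hgint t).const_mul b
    calc b * N t - c = ∫ ω, (b * ‖gradient f (θ t ω)‖ ^ 2 - c) ∂μ := by
          rw [integral_sub i1 (integrable_const c), integral_const_mul, integral_const]
          simp [hNdef]
      _ ≤ ∫ ω, ⟪gradient f (θ t ω), (μ[z t|ℱ t]) ω⟫ ∂μ :=
          integral_mono_ae (((hgint t).const_mul b).sub (integrable_const c)) hIce
            ((hcorr t).mono fun ω h => h)
      _ = ∫ ω, (μ[fun ω' => ⟪gradient f (θ t ω'), z t ω'⟫|ℱ t]) ω ∂μ :=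
          (integral_congr_ae (key1 t)).symm
      _ = ∫ ω, ⟪gradient f (θ t ω), z t ω⟫ ∂μ := integral_condExp (hℱ t)
  -- second moment bound
  have hI2 : ∀ t, ∫ ω, ‖z t ω‖ ^ 2 ∂μ ≤ 2 * A * (F t - fstar) + B * N t + C := by
    intro t
    have i1 : Integrable (fun ω => 2 * A * (f (θ t ω) - fstar)) μ := by
      exact ((hfint t).sub (integrable_const fstar)).const_mul (2 * A)
    have i2 : Integrable (fun ω => B * ‖gradient f (θ t ω)‖ ^ 2) μ := by
      exact (hgint t).const_mul B
    have i12 : Integrable (fun ω =>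
        2 * A * (f (θ t ω) - fstar) + B * ‖gradient f (θ t ω)‖ ^ 2) μ := by
      exact i1.add i2
    have hrhsint : Integrable (fun ω =>
        2 * A * (f (θ t ω) - fstar) + B * ‖gradient f (θ t ω)‖ ^ 2 + C) μ := by
      exact i12.add (integrable_const C)
    calc ∫ ω, ‖z t ω‖ ^ 2 ∂μ
        = ∫ ω, (μ[fun ω' => ‖z t ω'‖ ^ 2|ℱ t]) ω ∂μ := (integral_condExp (hℱ t)).symm
      _ ≤ ∫ ω, (2 * A * (f (θ t ω) - fstar) + B * ‖gradient f (θ t ω)‖ ^ 2 + C) ∂μ :=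
          integral_mono_ae integrable_condExp hrhsint (hsec t)
      _ = 2 * A * (F t - fstar) + B * N t + C := by
          have i3 : Integrable (fun ω => f (θ t ω) - fstar) μ := by
            exact (hfint t).sub (integrable_const fstar)
          rw [integral_add i12 (integrable_const C), integral_add i1 i2,
            integral_const_mul, integral_const_mul,
            integral_sub (hfint t) (integrable_const fstar), integral_const, integral_const]
          simp [hFdef, hNdef]
  -- pointwise descent
  have hdesc : ∀ t ω, f (θ (t + 1) ω) ≤
      f (θ t ω) - α * ⟪gradient f (θ t ω), z t ω⟫ + L / 2 * α ^ 2 * ‖z t ω‖ ^ 2 := by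
    intro t ω
    have h := sgd_descent f L hf hL (θ t ω) (θ (t + 1) ω)
    rw [hupdate t ω, sub_sub_cancel_left, inner_neg_right, real_inner_smul_right,
      norm_neg, norm_smul, Real.norm_eq_abs, mul_pow, sq_abs] at h
    rw [hupdate t ω]
    linarith
  -- one-step expected descent
  have hstep : ∀ t, F (t + 1) - fstar ≤ (1 + A * L * α ^ 2) * (F t - fstar)
      - α * b / 2 * N t + (α * c + L * α ^ 2 * C / 2) := by
    intro t
    have i4 : Integrable (fun ω => f (θ t ω) - α * ⟪gradient f (θ t ω), z t ω⟫) μ := by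
      exact (hfint t).sub ((hGz t).const_mul α)
    have i5 : Integrable (fun ω => L / 2 * α ^ 2 * ‖z t ω‖ ^ 2) μ := by
      exact (hzsq t).const_mul (L / 2 * α ^ 2)
    have hint : Integrable (fun ω => f (θ t ω) - α * ⟪gradient f (θ t ω), z t ω⟫
        + L / 2 * α ^ 2 * ‖z t ω‖ ^ 2) μ := by
      exact i4.add i5
    have h1 : F (t + 1) ≤ F t - α * (∫ ω, ⟪gradient f (θ t ω), z t ω⟫ ∂μ)
        + L / 2 * α ^ 2 * (∫ ω, ‖z t ω‖ ^ 2 ∂μ) := by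
      calc F (t + 1) ≤ ∫ ω, (f (θ t ω) - α * ⟪gradient f (θ t ω), z t ω⟫
          + L / 2 * α ^ 2 * ‖z t ω‖ ^ 2) ∂μ :=
            integral_mono (hfint (t + 1)) hint fun ω => hdesc t ω
        _ = F t - α * (∫ ω, ⟪gradient f (θ t ω), z t ω⟫ ∂μ)
            + L / 2 * α ^ 2 * (∫ ω, ‖z t ω‖ ^ 2 ∂μ) := by
            have i6 : Integrable (fun ω => α * ⟪gradient f (θ t ω), z t ω⟫) μ := by
              exact (hGz t).const_mul α
            rw [integral_add i4 i5, integral_sub (hfint t) i6,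
              integral_const_mul, integral_const_mul]
    have e1 : α * (b * N t - c) ≤ α * ∫ ω, ⟪gradient f (θ t ω), z t ω⟫ ∂μ :=
      mul_le_mul_of_nonneg_left (hI1 t) hα.le
    have e2 : L / 2 * α ^ 2 * (∫ ω, ‖z t ω‖ ^ 2 ∂μ) ≤
        L / 2 * α ^ 2 * (2 * A * (F t - fstar) + B * N t + C) :=
      mul_le_mul_of_nonneg_left (hI2 t) (by positivity)
    have e3 : L * α ^ 2 * B / 2 * N t ≤ α * b / 2 * N t := by
      have h4 : L * α ^ 2 * B / 2 ≤ α * b / 2 := by nlinarith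
      exact mul_le_mul_of_nonneg_right h4 (hNt t)
    linarith
  -- telescoping
  set m : ℝ := (Finset.range T).inf' (Finset.nonempty_range_iff.mpr hT.ne')
    (fun t => ∫ ω, ‖gradient f (θ t ω)‖ ^ 2 ∂μ) with hmdef
  have hm0 : 0 ≤ m := Finset.le_inf' _ _ fun t _ => hNt t
  have hmN : ∀ t, t < T → m ≤ N t := fun t ht =>
    Finset.inf'_le _ (Finset.mem_range.mpr ht)
  have hmain := sgd_telescope (fun t => F t - fstar) N (1 + A * L * α ^ 2)
    (α * c + L * α ^ 2 * C / 2) (α * b / 2)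
    (by nlinarith [mul_nonneg (mul_nonneg hA hLpos.le) (sq_nonneg α)])
    (by positivity) (by positivity)
    (fun t => sub_nonneg.mpr (hFt t)) hNt hstep T hT m hm0 hmN
  have hF0 : F 0 = f θ0 := by
    have h5 : (fun ω => f (θ 0 ω)) = fun _ω => f θ0 := funext fun ω => by rw [hθ0]
    rw [hFdef]
    simp only [h5]
    simp
  have hmain' : m ≤ (1 + A * L * α ^ 2) ^ T * (F 0 - fstar) / (α * b / 2 * T)
      + (α * c + L * α ^ 2 * C / 2) / (α * b / 2) := hmain
  rw [hF0] at hmain'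
  have hTr : (0:ℝ) < (T : ℝ) := by exact_mod_cast hT
  have heq : (1 + A * L * α ^ 2) ^ T * (f θ0 - fstar) / (α * b / 2 * T)
      + (α * c + L * α ^ 2 * C / 2) / (α * b / 2) =
      (2 * (1 + A * L * α ^ 2) ^ T / (b * α * T)) * (f θ0 - fstar)
      + L * α * C / b + 2 * c / b := by
    field_simp
    ring
  linarith [hmain', heq.le, heq.ge]
end

section
/- Let h(x, θ) be, for each θ, μ-strongly convex and twice continuously differentiable in x with minimizer x̂(θ), and let g be differentiable with L_g-Lipschitz gradient and ‖∇g‖ bounded. If x̃ satisfies ‖x̃ - x̂(θ)‖ ≤ ε and the approximate hypergradient is formed by replacing x̂(θ) with x̃ in z(θ) = ∂x̂(θ)^T ∇g(x̂(θ)), assuming ∂_x∇_θ h and ∇²_x h are Lipschitz in x and ‖∂_x∇_θ h‖ bounded, then the hypergradient error satisfies ‖e(θ)‖ ≤ Kε for a constant K depending only on μ, L_g, and the Lipschitz/boundedness constants. -/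
open RealInnerProductSpace

set_option maxHeartbeats 2000000 in
/-- Bound on the inexact hypergradient error in bilevel optimization: the
hypergradient is `∂x̂(θ)ᵀ∇g(x̂(θ))` with `∂x̂(θ) = -∇²ₓh(x̂,θ)⁻¹ ∂θ∇ₓh(x̂,θ)`;
replacing the exact lower-level minimizer `x̂` by an `ε`-accurate point `x̃`
incurs an `O(ε)` error, with a constant `K` depending only on the strong
convexity parameter `μM`, the Lipschitz/boundedness constants `Lg, Cg` of
`∇g`, `LB, CB` of the cross derivative `B`, and `LH` of the Hessian. The
Hessian solves `Hs x̂ ŵ = ∇g(x̂)` and `Hs x̃ w̃ = ∇g(x̃)` replace the explicit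
inverse Hessian. -/
theorem stmt_19 {n dth : ℕ} (μM Lg Cg LB CB LH : ℝ)
    (hμ : 0 < μM) (hLg : 0 ≤ Lg) (hCg : 0 ≤ Cg) (hLB : 0 ≤ LB)
    (hCB : 0 ≤ CB) (hLH : 0 ≤ LH) :
    ∃ K : ℝ, 0 < K ∧
      ∀ (h g : EuclideanSpace ℝ (Fin n) → ℝ)
        (Bm : EuclideanSpace ℝ (Fin n) →
          (EuclideanSpace ℝ (Fin dth) →L[ℝ] EuclideanSpace ℝ (Fin n)))
        (Hs : EuclideanSpace ℝ (Fin n) →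
          (EuclideanSpace ℝ (Fin n) →L[ℝ] EuclideanSpace ℝ (Fin n)))
        (xhat xtil what wtil : EuclideanSpace ℝ (Fin n)) (ε : ℝ),
        0 ≤ ε →
        ContDiff ℝ 2 h →
        (∀ x, Hs x = fderiv ℝ (fun y => gradient h y) x) →
        (∀ x v, μM * ‖v‖ ^ 2 ≤ ⟪v, Hs x v⟫) →
        (∀ x y, ‖Hs x - Hs y‖ ≤ LH * ‖x - y‖) →
        (∀ x y, ‖Bm x - Bm y‖ ≤ LB * ‖x - y‖) →
        (∀ x, ‖Bm x‖ ≤ CB) →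
        Differentiable ℝ g →
        (∀ x y, ‖gradient g x - gradient g y‖ ≤ Lg * ‖x - y‖) →
        (∀ x, ‖gradient g x‖ ≤ Cg) →
        gradient h xhat = 0 →
        ‖xtil - xhat‖ ≤ ε →
        Hs xhat what = gradient g xhat →
        Hs xtil wtil = gradient g xtil →
        ‖(ContinuousLinearMap.adjoint (Bm xtil)) wtil -
            (ContinuousLinearMap.adjoint (Bm xhat)) what‖ ≤ K * ε := by
  refine ⟨LB * (Cg / μM) + CB * ((Lg + LH * (Cg / μM)) / μM) + 1, by positivity, ?_⟩
  intro h g Bm Hs xhat xtil what wtil ε hε _ _ hcoerc hHlip hBlip hBbd _ hglip hgbd _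
    hclose hwhat hwtil
  -- coercivity: μM ‖v‖ ≤ ‖Hs x v‖
  have key : ∀ x v, μM * ‖v‖ ≤ ‖Hs x v‖ := by
    intro x v
    rcases eq_or_ne v 0 with rfl | hv
    · simp
    · have h1 := hcoerc x v
      have h2 : ⟪v, Hs x v⟫ ≤ ‖v‖ * ‖Hs x v‖ := real_inner_le_norm _ _
      have hvpos : (0:ℝ) < ‖v‖ := norm_pos_iff.mpr hv
      nlinarith
  have hwhat_bd : ‖what‖ ≤ Cg / μM := by
    have := key xhat what
    rw [hwhat] at this
    have h2 := (this.trans (hgbd xhat))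
    rw [le_div_iff₀' hμ]
    exact h2
  have hwtil_bd : ‖wtil‖ ≤ Cg / μM := by
    have := key xtil wtil
    rw [hwtil] at this
    have h2 := (this.trans (hgbd xtil))
    rw [le_div_iff₀' hμ]
    exact h2
  -- bound on w difference
  have hwdiff : ‖wtil - what‖ ≤ ((Lg + LH * (Cg / μM)) / μM) * ε := by
    have e1 : Hs xtil (wtil - what)
        = (gradient g xtil - gradient g xhat) + ((Hs xhat - Hs xtil) what) := by
      simp only [map_sub, ContinuousLinearMap.sub_apply, hwtil, hwhat]
      abel
    have n1 : ‖Hs xtil (wtil - what)‖ ≤ Lg * ε + (LH * ε) * (Cg / μM) := by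
      rw [e1]
      refine (norm_add_le _ _).trans (add_le_add ?_ ?_)
      · exact (hglip xtil xhat).trans (by nlinarith)
      · refine ((Hs xhat - Hs xtil).le_opNorm what).trans ?_
        have h3 : ‖Hs xhat - Hs xtil‖ ≤ LH * ε := by
          refine (hHlip xhat xtil).trans ?_
          rw [← norm_neg]
          simp only [neg_sub]
          nlinarith
        exact mul_le_mul h3 hwhat_bd (norm_nonneg _) (by positivity)
    have := (key xtil (wtil - what)).trans n1
    rw [← le_div_iff₀' hμ] at this
    refine this.trans (le_of_eq ?_)
    field_simp
  -- final decomposition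
  have decomp : (ContinuousLinearMap.adjoint (Bm xtil)) wtil -
      (ContinuousLinearMap.adjoint (Bm xhat)) what
      = (ContinuousLinearMap.adjoint (Bm xtil) - ContinuousLinearMap.adjoint (Bm xhat)) wtil
        + (ContinuousLinearMap.adjoint (Bm xhat)) (wtil - what) := by
    simp only [ContinuousLinearMap.sub_apply, map_sub]
    abel
  rw [decomp]
  have hadjnorm : ∀ A : EuclideanSpace ℝ (Fin dth) →L[ℝ] EuclideanSpace ℝ (Fin n),
      ‖ContinuousLinearMap.adjoint A‖ = ‖A‖ := fun A =>
    ContinuousLinearMap.adjoint.norm_map A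
  have hadj : ‖ContinuousLinearMap.adjoint (Bm xtil) - ContinuousLinearMap.adjoint (Bm xhat)‖
      = ‖Bm xtil - Bm xhat‖ := by
    rw [← map_sub]
    exact hadjnorm _
  have t1 : ‖(ContinuousLinearMap.adjoint (Bm xtil) - ContinuousLinearMap.adjoint (Bm xhat)) wtil‖
      ≤ (LB * ε) * (Cg / μM) := by
    refine (ContinuousLinearMap.le_opNorm _ _).trans ?_
    refine mul_le_mul ?_ hwtil_bd (norm_nonneg _) (by positivity)
    rw [hadj]
    refine (hBlip xtil xhat).trans (by nlinarith)
  have t2 : ‖(ContinuousLinearMap.adjoint (Bm xhat)) (wtil - what)‖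
      ≤ CB * (((Lg + LH * (Cg / μM)) / μM) * ε) := by
    refine (ContinuousLinearMap.le_opNorm _ _).trans ?_
    refine mul_le_mul ?_ hwdiff (norm_nonneg _) hCB
    rw [hadjnorm]
    exact hBbd xhat
  refine (norm_add_le _ _).trans ((add_le_add t1 t2).trans ?_)
  nlinarith [hε]
end
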